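/- Let G be a MAP instance, let {v,w} be a bad-pair of G with bp-components C₁,…,C_k, and pick any index j ∈ {1,…,k}. Let H_j be a 2-ECSS of C_j^{v,w}, and for each i ∈ {1,…,k} with i ≠ j let Hᵢ be a 2-ECSS of Cᵢ^⊘. Then the union of the edge sets of H₁,…,H_k is the edge set of a 2-ECSS of G. -/

import Mathlib

set_option autoImplicit false

/-!  A formal framework for the Matching Augmentation Problem (MAP):
loopless multigraphs with edge costs in `{0,1}` (given by the predicate
`isZero` marking the zero-edges). -/

/-- A finite loopless multigraph together with `{0,1}` edge costs:
`isZero e` means that the edge `e` has cost zero (otherwise it is a unit-edge). -/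
structure CostGraph where
  V : Type
  E : Type
  finV : Finite V
  finE : Finite E
  ends : E → Sym2 V
  loopless : ∀ e, ¬ (ends e).IsDiag
  isZero : E → Prop

namespace CostGraph

variable (G : CostGraph)

/-- `x` and `y` are joined by an edge of `F` and both lie in the node set `S`. -/
def Adj (S : Set G.V) (F : Set G.E) (x y : G.V) : Prop :=
  x ∈ S ∧ y ∈ S ∧ ∃ e ∈ F, G.ends e = s(x, y)

/-- Reachability in the sub-multigraph with node set `S` and edge set `F`. -/
def Reachable (S : Set G.V) (F : Set G.E) (x y : G.V) : Prop :=
  Relation.ReflTransGen (G.Adj S F) x y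

/-- The sub-multigraph with node set `S` and those edges of `F` having both
end nodes in `S` is connected (in particular `S` is nonempty). -/
def ConnectedOn (S : Set G.V) (F : Set G.E) : Prop :=
  S.Nonempty ∧ ∀ x ∈ S, ∀ y ∈ S, G.Reachable S F x y

/-- The sub-multigraph with node set `S` and edge set `F` is 2-edge-connected:
it has at least two nodes and removing any one edge leaves it connected. -/
def TwoECOn (S : Set G.V) (F : Set G.E) : Prop :=
  1 < S.ncard ∧ G.ConnectedOn S F ∧ ∀ e : G.E, G.ConnectedOn S (F \ {e})

/-- `F` is the edge set of a 2-edge-connected spanning subgraph (2-ECSS) of `G`. -/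
def TwoEC (F : Set G.E) : Prop := G.TwoECOn Set.univ F

/-- The cost of a set of edges: the number of unit-edges in it. -/
noncomputable def cost (F : Set G.E) : ℕ := {e ∈ F | ¬ G.isZero e}.ncard

/-- `opt G` is the minimum cost of a 2-ECSS of `G`. -/
noncomputable def opt : ℕ := sInf (G.cost '' {F | G.TwoEC F})

/-- `F` is a 2-edge cover: every node is incident to at least two edges of `F`. -/
def TwoEdgeCover (F : Set G.E) : Prop :=
  ∀ v : G.V, 2 ≤ {e ∈ F | v ∈ G.ends e}.ncard

/-- `tau G` is the minimum cost of a 2-edge cover of `G`. -/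
noncomputable def tau : ℕ := sInf (G.cost '' {F | G.TwoEdgeCover F})

/-- The zero-edges form a matching: no two distinct zero-edges share an end node. -/
def ZeroMatching : Prop :=
  ∀ e f : G.E, G.isZero e → G.isZero f → e ≠ f → ∀ x : G.V, x ∈ G.ends e → x ∉ G.ends f

/-- A MAP instance: a (finite, loopless) multigraph with `{0,1}` edge costs whose
zero-edges form a matching and which is 2-edge-connected. -/
def IsMAP : Prop := G.ZeroMatching ∧ G.TwoEC Set.univ

/-- The degree of a node: the number of edges incident to it. -/
noncomputable def degree (v : G.V) : ℕ := {e : G.E | v ∈ G.ends e}.ncard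

/-- `e, f` form a `{0,1}`-edge-pair: parallel edges, `e` of cost zero, `f` of cost one. -/
def IsZeroOnePair (e f : G.E) : Prop :=
  e ≠ f ∧ G.ends e = G.ends f ∧ G.isZero e ∧ ¬ G.isZero f

/-- `G` has no `{0,1}`-edge-pairs. -/
def NoZeroOnePair : Prop := ∀ e f, ¬ G.IsZeroOnePair e f

/-- `v` is a cut node: deleting `v` leaves a disconnected (or empty) graph. -/
def IsCutNode (v : G.V) : Prop := ¬ G.ConnectedOn ({v}ᶜ) Set.univ

/-- `{v, w}` is a bad-pair: `vw` is a zero-edge and deleting both `v` and `w`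
disconnects the graph. -/
def IsBadPair (v w : G.V) : Prop :=
  (∃ e, G.isZero e ∧ G.ends e = s(v, w)) ∧
    ¬ G.ConnectedOn (({v, w} : Set G.V)ᶜ) Set.univ

/-- The number of bad-pairs of `G` (counted as unordered pairs). -/
noncomputable def badPairCount : ℕ :=
  {z : Sym2 G.V | ∃ a b, z = s(a, b) ∧ G.IsBadPair a b}.ncard

/-- `C` is (the node set of) a connected component of the sub-multigraph with node
set `S` and edge set `F`. -/
def IsCompOf (S : Set G.V) (F : Set G.E) (C : Set G.V) : Prop :=
  C ⊆ S ∧ C.Nonempty ∧ G.ConnectedOn C F ∧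
    ∀ x ∈ C, ∀ y ∈ S, G.Adj S F x y → y ∈ C

/-- `Q` is the node set of a redundant 4-cycle: a 4-cycle `u₁u₂u₃u₄` with
`V(C) ≠ V(G)`, two non-adjacent edges of cost zero and two non-adjacent nodes
of degree two in `G`. -/
def IsRed4CycleOn (Q : Set G.V) : Prop :=
  ∃ (u₁ u₂ u₃ u₄ : G.V) (e₁ e₂ e₃ e₄ : G.E),
    Q = {u₁, u₂, u₃, u₄} ∧
    u₁ ≠ u₂ ∧ u₁ ≠ u₃ ∧ u₁ ≠ u₄ ∧ u₂ ≠ u₃ ∧ u₂ ≠ u₄ ∧ u₃ ≠ u₄ ∧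
    e₁ ≠ e₂ ∧ e₁ ≠ e₃ ∧ e₁ ≠ e₄ ∧ e₂ ≠ e₃ ∧ e₂ ≠ e₄ ∧ e₃ ≠ e₄ ∧
    G.ends e₁ = s(u₁, u₂) ∧ G.ends e₂ = s(u₂, u₃) ∧
    G.ends e₃ = s(u₃, u₄) ∧ G.ends e₄ = s(u₄, u₁) ∧
    G.isZero e₁ ∧ G.isZero e₃ ∧
    G.degree u₂ = 2 ∧ G.degree u₄ = 2 ∧
    Q ≠ Set.univ

/-- A well-structured MAP instance: no `{0,1}`-edge-pairs, no redundant 4-cycles,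
no cut nodes and no bad-pairs. -/
def WellStructured : Prop :=
  G.IsMAP ∧ G.NoZeroOnePair ∧ (∀ Q, ¬ G.IsRed4CycleOn Q) ∧
    (∀ v, ¬ G.IsCutNode v) ∧ (∀ v w, ¬ G.IsBadPair v w)

/-- `G` is 2-node-connected: more than two nodes and deleting any one node
leaves a connected graph. -/
def TwoNC : Prop :=
  2 < Nat.card G.V ∧ ∀ v : G.V, G.ConnectedOn ({v}ᶜ) Set.univ

/-- Bridge of the sub-multigraph with node set `S` and edge set `F`: an edge of `F`
inside `S` whose removal disconnects its end nodes. -/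
def IsBridgeOn (S : Set G.V) (F : Set G.E) (e : G.E) : Prop :=
  e ∈ F ∧ (∀ x ∈ G.ends e, x ∈ S) ∧
    ∀ x y, G.ends e = s(x, y) → ¬ G.Reachable S (F \ {e}) x y

/-- Bridge of the spanning subgraph `(V, F)`. -/
def IsBridge (F : Set G.E) (e : G.E) : Prop := G.IsBridgeOn Set.univ F e

/-- `B` is (the node set of) a 2ec-block of the spanning subgraph `(V, F)`:
a maximal connected bridgeless subgraph with at least two nodes, equivalently a
connected component with at least two nodes of the graph obtained by deleting
all bridges. -/
def IsTwoECBlock (F : Set G.E) (B : Set G.V) : Prop :=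
  G.IsCompOf Set.univ (F \ {e | G.IsBridge F e}) B ∧ 2 ≤ B.ncard

/-- Delete a set `D` of edges. -/
noncomputable def deleteEdges (D : Set G.E) : CostGraph where
  V := G.V
  E := {e : G.E // e ∉ D}
  finV := G.finV
  finE := by haveI := G.finE; exact Subtype.finite
  ends e := G.ends e.1
  loopless e := G.loopless e.1
  isZero e := G.isZero e.1

/-- The sub-instance induced on a set `S` of nodes. -/
noncomputable def induce (S : Set G.V) : CostGraph where
  V := ↥S
  E := {e : G.E // ∀ x ∈ G.ends e, x ∈ S}
  finV := by haveI := G.finV; exact Subtype.finite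
  finE := by haveI := G.finE; exact Subtype.finite
  ends e := (G.ends e.1).pmap Subtype.mk e.2
  loopless e := by
    intro hd
    exact G.loopless e.1
      (by simpa [Sym2.pmap_subtype_map_subtypeVal] using hd.map (f := Subtype.val))
  isZero e := G.isZero e.1

/-- Contraction of `G` along (the equivalence generated by) a relation `R`:
node classes are identified, and edges joining identified nodes are removed
(no loops are created). -/
noncomputable def contract (R : G.V → G.V → Prop) : CostGraph where
  V := Quotient (Relation.EqvGen.setoid R)
  E := {e : G.E // ¬ (Sym2.map (Quotient.mk (Relation.EqvGen.setoid R)) (G.ends e)).IsDiag}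
  finV := by haveI := G.finV; exact Quotient.finite _
  finE := by haveI := G.finE; exact Subtype.finite
  ends e := Sym2.map (Quotient.mk (Relation.EqvGen.setoid R)) (G.ends e.1)
  loopless e := e.2
  isZero e := G.isZero e.1

/-- The relation identifying the nodes of each redundant 4-cycle. -/
def red4Rel (x y : G.V) : Prop := ∃ Q, G.IsRed4CycleOn Q ∧ x ∈ Q ∧ y ∈ Q

/-- The multigraph obtained from `G` by contracting all redundant 4-cycles. -/
noncomputable def contractRed4 : CostGraph := G.contract G.red4Rel

/-- For a bad-pair `{v,w}` and a bp-component `C`: the sub-instance `C^{v,w}`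
induced on `V(C) ∪ {v, w}`. -/
noncomputable def bpUp (v w : G.V) (C : Set G.V) : CostGraph :=
  G.induce (C ∪ {v, w})

/-- For a bad-pair `{v,w}` and a bp-component `C`: the instance `C^⊘`, obtained
from `C^{v,w}` by contracting the zero-edge `vw` if `C` has at least two nodes,
and equal to `C^{v,w}` if `C` has exactly one node. -/
noncomputable def bpContr (v w : G.V) (C : Set G.V) : CostGraph :=
  if 2 ≤ C.ncard then
    (G.bpUp v w C).contract (fun x y => x.1 = v ∧ y.1 = w)
  else G.bpUp v w C

/-- Every edge of `C^⊘` is an edge of `G`. -/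
noncomputable def bpContrEdge (v w : G.V) (C : Set G.V) :
    (G.bpContr v w C).E → G.E := by
  unfold bpContr
  by_cases h : 2 ≤ C.ncard
  · rw [if_pos h]; exact fun e => e.1.1
  · rw [if_neg h]; exact fun e => e.1

/-- The sub-multigraph `(S, F)` is 2-node-connected. -/
def TwoNCOn (S : Set G.V) (F : Set G.E) : Prop :=
  2 < S.ncard ∧ ∀ v : G.V, G.ConnectedOn (S \ {v}) F

/-- The sub-multigraph `(S, F)` consists of two nodes joined by two parallel edges. -/
def IsParallelPairBlock (S : Set G.V) (F : Set G.E) : Prop :=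
  S.ncard = 2 ∧ ∃ e f, e ≠ f ∧ G.ends e = G.ends f ∧ F = {e, f}

/-- `(B i, F i)` (for `i : Fin k`) are the blocks of `G`: each block is 2-node-connected
or a pair of nodes joined by two parallel edges, the edge set of `G` is partitioned
among the blocks, each `B i` is the set of end nodes of the edges of `F i`, and any
two blocks share at most one node. -/
def IsBlockDecomp {k : ℕ} (B : Fin k → Set G.V) (F : Fin k → Set G.E) : Prop :=
  (∀ i, ∀ e ∈ F i, ∀ x ∈ G.ends e, x ∈ B i) ∧
  (∀ i, B i = {x | ∃ e ∈ F i, x ∈ G.ends e}) ∧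
  (Set.univ : Set G.E) = ⋃ i, F i ∧
  (∀ i j, i ≠ j → Disjoint (F i) (F j)) ∧
  (∀ i j, i ≠ j → (B i ∩ B j).ncard ≤ 1) ∧
  (∀ i, G.TwoNCOn (B i) (F i) ∨ G.IsParallelPairBlock (B i) (F i))

end CostGraph

/-- `TauHatRel G t` holds when `t` is a value of `τ̂` for `G`, i.e. a value obtainable
by the following recursion: if `G` has no redundant 4-cycles and no cut nodes
(so it is well-structured provided it has no `{0,1}`-edge-pairs and no bad-pairs)
then `τ̂(G) = τ(G)`; otherwise contract all (`q`, say) redundant 4-cycles of `G`,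
split the resulting graph at its cut nodes into its blocks `G₁, …, G_k`, and set
`τ̂(G) = 2q + τ̂(G₁) + … + τ̂(G_k)`. -/
inductive TauHatRel : CostGraph → ℕ → Prop where
  | base (G : CostGraph)
      (h4 : ∀ Q, ¬ G.IsRed4CycleOn Q) (hc : ∀ v, ¬ G.IsCutNode v) :
      TauHatRel G G.tau
  | step (G : CostGraph) (k : ℕ)
      (B : Fin k → Set G.contractRed4.V) (F : Fin k → Set G.contractRed4.E)
      (t : Fin k → ℕ)
      (hobstr : (∃ Q, G.IsRed4CycleOn Q) ∨ (∃ v, G.IsCutNode v))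
      (hdec : G.contractRed4.IsBlockDecomp B F)
      (ht : ∀ i, TauHatRel (G.contractRed4.induce (B i)) (t i)) :
      TauHatRel G (2 * {Q | G.IsRed4CycleOn Q}.ncard + ∑ i, t i)

namespace CostGraph

/-- `τ̂(G)`: the value associated to `G` by the recursion of `TauHatRel`. -/
noncomputable def tauHat (G : CostGraph) : ℕ := sInf {t | TauHatRel G t}

open Classical in
/-- The lower bound `lb(G)`: `τ̂(G)` if `G` has no `{0,1}`-edge-pairs, no cut nodes
and no bad-pairs, and `opt(G)` otherwise. -/
noncomputable def lb (G : CostGraph) : ℕ :=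
  if G.NoZeroOnePair ∧ (∀ v, ¬ G.IsCutNode v) ∧ (∀ v w, ¬ G.IsBadPair v w)
  then G.tauHat else G.opt

end CostGraph

namespace CostGraph

variable {G : CostGraph}

lemma adj_symm {S : Set G.V} {F : Set G.E} {x y : G.V} (h : G.Adj S F x y) :
    G.Adj S F y x := by
  obtain ⟨hx, hy, e, he, hend⟩ := h
  exact ⟨hy, hx, e, he, by rw [hend, Sym2.eq_swap]⟩

lemma reach_symm {S : Set G.V} {F : Set G.E} {x y : G.V}
    (h : G.Reachable S F x y) : G.Reachable S F y x := by
  induction h with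
  | refl => exact Relation.ReflTransGen.refl
  | tail _ hbc ih => exact Relation.ReflTransGen.head (adj_symm hbc) ih

lemma reach_mono {S S' : Set G.V} {F F' : Set G.E} (hS : S ⊆ S') (hF : F ⊆ F')
    {x y : G.V} (h : G.Reachable S F x y) : G.Reachable S' F' x y := by
  induction h with
  | refl => exact Relation.ReflTransGen.refl
  | tail _ hbc ih =>
      obtain ⟨h1, h2, e, he, hend⟩ := hbc
      exact ih.tail ⟨hS h1, hS h2, e, hF he, hend⟩

lemma sym2_cases {α : Type*} (z : Sym2 α) : ∃ x y, z = s(x, y) :=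
  z.ind (fun x y => ⟨x, y, rfl⟩)

lemma induce_ends_eq {S : Set G.V} (e : (G.induce S).E) (x y : (G.induce S).V)
    (h : (G.induce S).ends e = s(x, y)) : G.ends e.1 = s(x.1, y.1) := by
  have := congrArg (Sym2.map Subtype.val) h
  rw [show (G.induce S).ends e = (G.ends e.1).pmap Subtype.mk e.2 from rfl,
    Sym2.pmap_subtype_map_subtypeVal] at this
  exact this.trans (Sym2.map_pair_eq _ _ _)

/-- Connectivity transfer from an induced subgraph. -/
lemma transfer_up {S : Set G.V} (E0 : Set (G.induce S).E)
    (hc : (G.induce S).ConnectedOn Set.univ E0)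
    (Conn : G.V → G.V → Prop) (hrefl : ∀ x, Conn x x)
    (htrans : ∀ x y z, Conn x y → Conn y z → Conn x z)
    (hedge : ∀ e ∈ E0, ∀ p q : G.V, G.ends e.1 = s(p, q) → Conn p q) :
    ∀ u ∈ S, ∀ u' ∈ S, Conn u u' := by
  intro u hu u' hu'
  have h := hc.2 ⟨u, hu⟩ trivial ⟨u', hu'⟩ trivial
  have key : ∀ z : (G.induce S).V,
      (G.induce S).Reachable Set.univ E0 ⟨u, hu⟩ z → Conn u z.1 := by
    intro z hz
    induction hz with
    | refl => exact hrefl u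
    | tail _ hbc ih =>
        obtain ⟨_, _, e, he, hend⟩ := hbc
        exact htrans _ _ _ ih (hedge e he _ _ (induce_ends_eq e _ _ hend))
  exact key _ h

end CostGraph

namespace CostGraph

variable {G : CostGraph}

/-- Connectivity transfer from a contraction of an induced subgraph. -/
lemma transfer_contr {S : Set G.V} {v w : G.V} (hv : v ∈ S) (hw : w ∈ S)
    (R : (G.induce S).V → (G.induce S).V → Prop)
    (hR : ∀ x y, R x y → x.1 = v ∧ y.1 = w)
    (E0 : Set ((G.induce S).contract R).E)
    (hc : ((G.induce S).contract R).ConnectedOn Set.univ E0)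
    (Conn : G.V → G.V → Prop) (hrefl : ∀ x, Conn x x)
    (hsymm : ∀ x y, Conn x y → Conn y x)
    (htrans : ∀ x y z, Conn x y → Conn y z → Conn x z)
    (hvw : Conn v w)
    (hedge : ∀ e ∈ E0, ∀ p q : G.V, G.ends e.1.1 = s(p, q) → Conn p q) :
    ∀ u ∈ S, ∀ u' ∈ S, Conn u u' := by
  have compat : ∀ x y : (G.induce S).V, Relation.EqvGen R x y → Conn x.1 y.1 := by
    intro x y h
    induction h with
    | rel x y hxy => obtain ⟨h1, h2⟩ := hR x y hxy; rw [h1, h2]; exact hvw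
    | refl x => exact hrefl _
    | symm _ _ _ ih => exact hsymm _ _ ih
    | trans _ _ _ _ _ ih1 ih2 => exact htrans _ _ _ ih1 ih2
  intro u hu u' hu'
  have h := hc.2 (Quotient.mk _ ⟨u, hu⟩) trivial (Quotient.mk _ ⟨u', hu'⟩) trivial
  have key : ∀ c : ((G.induce S).contract R).V,
      ((G.induce S).contract R).Reachable Set.univ E0 (Quotient.mk _ ⟨u, hu⟩) c →
      ∀ z : (G.induce S).V, Quotient.mk _ z = c → Conn u z.1 := by
    intro c hreach
    induction hreach with
    | refl =>
        intro z hz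
        exact hsymm _ _ (compat z ⟨u, hu⟩ (Quotient.exact hz))
    | tail _ hbc ih =>
        intro z hz
        obtain ⟨_, _, e, he, hend⟩ := hbc
        obtain ⟨x, y, hxy⟩ := sym2_cases ((G.induce S).ends e.1)
        have hG : G.ends e.1.1 = s(x.1, y.1) := induce_ends_eq e.1 x y hxy
        rw [show ((G.induce S).contract R).ends e
              = Sym2.map (Quotient.mk _) ((G.induce S).ends e.1) from rfl, hxy,
            Sym2.map_pair_eq] at hend
        rcases Sym2.eq_iff.mp hend with ⟨hb, hcc⟩ | ⟨hb, hcc⟩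
        · exact htrans _ _ _ (htrans _ _ _ (ih x hb) (hedge e he _ _ hG))
            (compat y z (Quotient.exact (hcc.trans hz.symm)))
        · exact htrans _ _ _ (htrans _ _ _ (ih y hcc)
              (hedge e he _ _ (by rw [hG, Sym2.eq_swap])))
            (compat x z (Quotient.exact (hb.trans hz.symm)))
  exact key _ h _ rfl

lemma bpContr_pos {v w : G.V} {C : Set G.V} (h : 2 ≤ C.ncard) :
    G.bpContr v w C = (G.bpUp v w C).contract (fun x y => x.1 = v ∧ y.1 = w) := by
  rw [bpContr, if_pos h]

lemma bpContr_neg {v w : G.V} {C : Set G.V} (h : ¬ 2 ≤ C.ncard) :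
    G.bpContr v w C = G.bpUp v w C := by
  rw [bpContr, if_neg h]

lemma bpContrEdge_pos {v w : G.V} {C : Set G.V} (h : 2 ≤ C.ncard) :
    HEq (G.bpContrEdge v w C)
      (fun e : ((G.bpUp v w C).contract (fun x y => x.1 = v ∧ y.1 = w)).E => e.1.1) := by
  rw [bpContrEdge]
  simp only [dif_pos h, id_eq, eq_mpr_eq_cast]
  exact cast_heq _ _

lemma bpContrEdge_neg {v w : G.V} {C : Set G.V} (h : ¬ 2 ≤ C.ncard) :
    HEq (G.bpContrEdge v w C) (fun e : (G.bpUp v w C).E => e.1) := by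
  rw [bpContrEdge]
  simp only [dif_neg h, id_eq, eq_mpr_eq_cast]
  exact cast_heq _ _

end CostGraph

namespace CostGraph

variable {G : CostGraph}

lemma heq_inj {α β : Type} {γ : Type*} (h : α = β) (f : α → γ) (g : β → γ) (hfg : HEq f g)
    (hg : Function.Injective g) : Function.Injective f := by
  subst h
  rw [eq_of_heq hfg]
  exact hg

lemma bpContrEdge_inj (v w : G.V) (C : Set G.V) :
    Function.Injective (G.bpContrEdge v w C) := by
  by_cases h2 : 2 ≤ C.ncard
  · exact heq_inj (congrArg CostGraph.E (bpContr_pos h2)) _ _ (bpContrEdge_pos h2)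
      (fun a b h => Subtype.ext (Subtype.ext h))
  · exact heq_inj (congrArg CostGraph.E (bpContr_neg h2)) _ _ (bpContrEdge_neg h2)
      (fun a b h => Subtype.ext h)

lemma piece_transfer (v w : G.V) (C : Set G.V)
    (H : CostGraph) (hH : H = G.bpContr v w C)
    (π : H.E → G.E) (hπ : HEq π (G.bpContrEdge v w C))
    (E0 : Set H.E) (hc : H.ConnectedOn Set.univ E0)
    (Conn : G.V → G.V → Prop) (hrefl : ∀ x, Conn x x)
    (hsymm : ∀ x y, Conn x y → Conn y x)
    (htrans : ∀ x y z, Conn x y → Conn y z → Conn x z)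
    (hvw : Conn v w)
    (hedge : ∀ e ∈ E0, ∀ p q : G.V, G.ends (π e) = s(p, q) → Conn p q) :
    ∀ u ∈ C ∪ {v, w}, ∀ u' ∈ C ∪ {v, w}, Conn u u' := by
  by_cases h2 : 2 ≤ C.ncard
  · have hH' : H = (G.bpUp v w C).contract (fun x y => x.1 = v ∧ y.1 = w) :=
      hH.trans (bpContr_pos h2)
    subst hH'
    have hπ' : π = fun e => e.1.1 := eq_of_heq (hπ.trans (bpContrEdge_pos h2))
    subst hπ'
    exact transfer_contr (S := C ∪ {v, w}) (v := v) (w := w)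
      (Or.inr (Or.inl rfl)) (Or.inr (Or.inr rfl)) _ (fun x y h => h)
      E0 hc Conn hrefl hsymm htrans hvw hedge
  · have hH' : H = G.bpUp v w C := hH.trans (bpContr_neg h2)
    subst hH'
    have hπ' : π = fun e => e.1 := eq_of_heq (hπ.trans (bpContrEdge_neg h2))
    subst hπ'
    exact transfer_up (S := C ∪ {v, w}) E0 hc Conn hrefl htrans hedge

lemma reach_stay {S : Set G.V} {F : Set G.E} {u y : G.V}
    (h : G.Reachable S F u y) :
    G.Reachable {z | z ∈ S ∧ G.Reachable S F u z} F u y := by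
  induction h with
  | refl => exact Relation.ReflTransGen.refl
  | tail hab hbc ih =>
      exact ih.tail ⟨⟨hbc.1, hab⟩, ⟨hbc.2.1, hab.tail hbc⟩, hbc.2.2⟩

lemma mem_comp (A : Set G.V) (u : G.V) (hu : u ∈ A) :
    G.IsCompOf A Set.univ {z | z ∈ A ∧ G.Reachable A Set.univ u z} ∧
      u ∈ {z | z ∈ A ∧ G.Reachable A Set.univ u z} := by
  have humem : u ∈ {z | z ∈ A ∧ G.Reachable A Set.univ u z} :=
    ⟨hu, Relation.ReflTransGen.refl⟩
  refine ⟨⟨fun z hz => hz.1, ⟨u, humem⟩, ⟨⟨u, humem⟩, ?_⟩, ?_⟩, humem⟩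
  · intro x hx y hy
    exact Relation.ReflTransGen.trans (reach_symm (reach_stay hx.2)) (reach_stay hy.2)
  · intro x hx y hy hadj
    exact ⟨hy, hx.2.tail hadj⟩

end CostGraph


/-- Let `G` be a MAP instance, `{v,w}` a bad-pair of `G` with
bp-components `C₁, …, C_k`, and `j` an index. Given a 2-ECSS `H_j` of `C_j^{v,w}`
and, for each `i ≠ j`, a 2-ECSS `H_i` of `C_i^⊘`, the union of the edge sets of
`H₁, …, H_k` is the edge set of a 2-ECSS of `G`. -/
theorem union_of_piece_twoECSS (G : CostGraph) (hG : G.IsMAP)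
    (v w : G.V) (hbp : G.IsBadPair v w)
    (k : ℕ) (C : Fin k → Set G.V)
    (hC : ∀ i, G.IsCompOf (({v, w} : Set G.V)ᶜ) Set.univ (C i))
    (hall : ∀ D, G.IsCompOf (({v, w} : Set G.V)ᶜ) Set.univ D → ∃ i, C i = D)
    (hinj : Function.Injective C)
    (j : Fin k)
    (Fj : Set (G.bpUp v w (C j)).E) (hFj : (G.bpUp v w (C j)).TwoEC Fj)
    (Fi : ∀ i : Fin k, Set (G.bpContr v w (C i)).E)
    (hFi : ∀ i, i ≠ j → (G.bpContr v w (C i)).TwoEC (Fi i)) :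
    G.TwoEC ((Subtype.val '' Fj) ∪
      ⋃ i ∈ {i : Fin k | i ≠ j}, G.bpContrEdge v w (C i) '' (Fi i)) := by
  classical
  set F : Set G.E := (Subtype.val '' Fj) ∪
      ⋃ i ∈ {i : Fin k | i ≠ j}, G.bpContrEdge v w (C i) '' (Fi i) with hF
  have main : ∀ e0 : G.E, G.ConnectedOn Set.univ (F \ {e0}) := by
    intro e0
    set Conn : G.V → G.V → Prop :=
      fun x y => G.Reachable Set.univ (F \ {e0}) x y with hConn
    have hrefl : ∀ x, Conn x x := fun x => Relation.ReflTransGen.refl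
    have hsymm : ∀ x y, Conn x y → Conn y x := fun x y => CostGraph.reach_symm
    have htrans : ∀ x y z, Conn x y → Conn y z → Conn x z :=
      fun _ _ _ h1 h2 => Relation.ReflTransGen.trans h1 h2
    have pieceJ : ∀ u ∈ C j ∪ {v, w}, ∀ u' ∈ C j ∪ {v, w}, Conn u u' := by
      obtain ⟨E0, hE0conn, hE0im⟩ :
          ∃ E0 : Set (G.bpUp v w (C j)).E,
            (G.bpUp v w (C j)).ConnectedOn Set.univ E0 ∧
            ∀ e ∈ E0, e.1 ∈ F \ {e0} := by
        by_cases hcase : ∃ f ∈ Fj, f.1 = e0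
        · obtain ⟨f, hf, hfe⟩ := hcase
          refine ⟨Fj \ {f}, hFj.2.2 f, fun e he => ⟨Or.inl ⟨e, he.1, rfl⟩, ?_⟩⟩
          intro hee
          exact he.2 (Subtype.ext ((Set.mem_singleton_iff.mp hee).trans hfe.symm))
        · exact ⟨Fj, hFj.2.1, fun e he =>
            ⟨Or.inl ⟨e, he, rfl⟩, fun hee => hcase ⟨e, he, Set.mem_singleton_iff.mp hee⟩⟩⟩
      exact CostGraph.transfer_up (S := C j ∪ {v, w}) E0 hE0conn Conn hrefl htrans
        (fun e he p q h => Relation.ReflTransGen.single ⟨trivial, trivial, e.1, hE0im e he, h⟩)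
    have hvS : v ∈ C j ∪ {v, w} := Or.inr (Or.inl rfl)
    have hwS : w ∈ C j ∪ {v, w} := Or.inr (Or.inr rfl)
    have hvw : Conn v w := pieceJ v hvS w hwS
    have pieceI : ∀ i, i ≠ j → ∀ u ∈ C i ∪ {v, w}, Conn u v := by
      intro i hij u hu
      obtain ⟨E0, hE0conn, hE0im⟩ :
          ∃ E0 : Set (G.bpContr v w (C i)).E,
            (G.bpContr v w (C i)).ConnectedOn Set.univ E0 ∧
            ∀ e ∈ E0, G.bpContrEdge v w (C i) e ∈ F \ {e0} := by
        have hinF : ∀ e ∈ Fi i, G.bpContrEdge v w (C i) e ∈ F :=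
          fun e he => Or.inr (Set.mem_biUnion hij ⟨e, he, rfl⟩)
        by_cases hcase : ∃ f ∈ Fi i, G.bpContrEdge v w (C i) f = e0
        · obtain ⟨f, hf, hfe⟩ := hcase
          refine ⟨Fi i \ {f}, (hFi i hij).2.2 f, fun e he => ⟨hinF e he.1, ?_⟩⟩
          intro hee
          exact he.2 (CostGraph.bpContrEdge_inj v w (C i)
            ((Set.mem_singleton_iff.mp hee).trans hfe.symm))
        · exact ⟨Fi i, (hFi i hij).2.1, fun e he =>
            ⟨hinF e he, fun hee => hcase ⟨e, he, Set.mem_singleton_iff.mp hee⟩⟩⟩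
      exact CostGraph.piece_transfer v w (C i) _ rfl _ HEq.rfl E0 hE0conn
        Conn hrefl hsymm htrans hvw
        (fun e he p q h => Relation.ReflTransGen.single ⟨trivial, trivial, _, hE0im e he, h⟩)
        u hu v (Or.inr (Or.inl rfl))
    have allv : ∀ x : G.V, Conn x v := by
      intro x
      by_cases hx : x ∈ ({v, w} : Set G.V)
      · simp only [Set.mem_insert_iff, Set.mem_singleton_iff] at hx
        rcases hx with rfl | rfl
        · exact hrefl x
        · exact hsymm _ _ hvw
      · obtain ⟨hcomp, hmem⟩ := CostGraph.mem_comp (({v, w} : Set G.V)ᶜ) x hx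
        obtain ⟨i, hi⟩ := hall _ hcomp
        by_cases hij : i = j
        · subst hij
          exact pieceJ x (Or.inl (hi.symm ▸ hmem)) v hvS
        · exact pieceI i hij x (Or.inl (hi.symm ▸ hmem))
    exact ⟨⟨v, trivial⟩, fun x _ y _ => htrans _ _ _ (allv x) (hsymm _ _ (allv y))⟩
  obtain ⟨ez, hez⟩ := hbp.1
  refine ⟨hG.2.1, ?_, main⟩
  obtain ⟨hne, hconn⟩ := main ez
  exact ⟨hne, fun x hx y hy =>
    CostGraph.reach_mono subset_rfl Set.diff_subset (hconn x hx y hy)⟩
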